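/- Let T be a directed tree such that the set Chi(u) of children of u is countably infinite for every u ∈ V. Then there exists a family λ = {λ_v}_{v∈V°} of nonzero complex numbers (which can be chosen positive real) such that the weighted shift S_λ has dense domain in ℓ²(V) and D(S_λ²) = {0}. -/

import Mathlib

open scoped ENNReal NNReal Classical

noncomputable section

/-- A directed tree: a directed graph with nonempty vertex set in which each vertex has
at most one parent, there are no circuits, and the underlying undirected graph is
connected and has no cycles (i.e. is a tree). -/
structure DirectedTree (V : Type) where
  edge : V → V → Prop
  nonempty : Nonempty V
  antisymm : ∀ u v : V, edge u v → ¬ edge v u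
  parent_unique : ∀ u v w : V, edge u w → edge v w → u = v
  isTree : (SimpleGraph.fromRel edge).IsTree

namespace DirectedTree

variable {V : Type} (T : DirectedTree V)

/-- The set of children of a vertex. -/
def chi (u : V) : Set V := {v | T.edge u v}

/-- `v` has a parent. -/
def HasParent (v : V) : Prop := ∃ u, T.edge u v

/-- `V⁰`: the set of non-root vertices, i.e. the vertices possessing a parent. -/
def Vcirc : Set V := {v | T.HasParent v}

/-- The tree is leafless if every vertex has a child. -/
def Leafless : Prop := ∀ u : V, (T.chi u).Nonempty

/-- The parent of a vertex (junk value if the vertex is a root). -/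
def par (v : V) : V := if h : T.HasParent v then h.choose else T.nonempty.some

/-- The set of descendants of a vertex. -/
def desc (u : V) : Set V := {w | Relation.ReflTransGen T.edge u w}

/-- The formal weighted shift map `Λ_T` acting on all complex functions on `V`. -/
def Lam (lam : V → ℂ) (f : V → ℂ) : V → ℂ :=
  fun v => if T.HasParent v then lam v * f (T.par v) else 0

/-- The domain of the weighted shift `S_λ`. -/
def domain (lam : V → ℂ) : Set (lp (fun _ : V => ℂ) 2) :=
  {f | Memℓp (T.Lam lam ⇑f) 2}

/-- The weighted shift `S_λ` (extended by `0` outside its domain). -/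
def shift (lam : V → ℂ) (f : lp (fun _ : V => ℂ) 2) : lp (fun _ : V => ℂ) 2 :=
  if h : f ∈ T.domain lam then (⟨T.Lam lam ⇑f, h⟩ : lp (fun _ : V => ℂ) 2) else 0

/-- The domain of `S_λ²`. -/
def squareDomain (lam : V → ℂ) : Set (lp (fun _ : V => ℂ) 2) :=
  {f | f ∈ T.domain lam ∧ T.shift lam f ∈ T.domain lam}

/-- The domain of the adjoint `S_λ*`. -/
def adjDomain (lam : V → ℂ) : Set (lp (fun _ : V => ℂ) 2) :=
  {g | ∃ h : lp (fun _ : V => ℂ) 2,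
    ∀ f ∈ T.domain lam, (inner ℂ (T.shift lam f) g : ℂ) = inner ℂ f h}

/-- `S_λ` is hyponormal: it is densely defined, `D(S_λ) ⊆ D(S_λ*)` and
`‖S_λ* f‖ ≤ ‖S_λ f‖` for every `f ∈ D(S_λ)` (the adjoint value at `f` being any vector
`h` satisfying `⟪S_λ g, f⟫ = ⟪g, h⟫` for all `g ∈ D(S_λ)`; it is unique by density). -/
def IsHyponormal (lam : V → ℂ) : Prop :=
  Dense (T.domain lam) ∧ T.domain lam ⊆ T.adjDomain lam ∧
    ∀ f ∈ T.domain lam, ∀ h : lp (fun _ : V => ℂ) 2,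
      (∀ g ∈ T.domain lam, (inner ℂ (T.shift lam g) f : ℂ) = inner ℂ g h) →
        ‖h‖ ≤ ‖T.shift lam f‖

/-- `ζ_u = (Σ_{v ∈ Chi(u)} |λ_v|²)^{1/2} ∈ [0,∞]`. -/
def zeta (lam : V → ℂ) (u : V) : ℝ≥0∞ :=
  (∑' v : T.chi u, ((‖lam (v : V)‖₊ : ℝ≥0∞)) ^ 2) ^ (1/2 : ℝ)

end DirectedTree

namespace DirectedTree

variable {V : Type} (T : DirectedTree V)

lemma edge_par {v : V} (h : T.HasParent v) : T.edge (T.par v) v := by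
  rw [par, dif_pos h]; exact h.choose_spec

lemma par_eq {u v : V} (h : T.edge u v) : T.par v = u :=
  T.parent_unique _ _ _ (T.edge_par ⟨u, h⟩) h

/-- Index of a vertex among its siblings, w.r.t. a chosen family of enumerations. -/
def auxIdx (e : ∀ u : V, ℕ ≃ T.chi u) (v : V) : ℕ :=
  if hv : T.HasParent v then (e (T.par v)).symm ⟨v, T.edge_par hv⟩ else 0

/-- The weights. -/
def auxLam (e : ∀ u : V, ℕ ≃ T.chi u) (v : V) : ℂ :=
  (((2:ℝ) ^ T.auxIdx e (T.par v) * ((Real.sqrt 2)⁻¹) ^ T.auxIdx e v : ℝ) : ℂ)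

lemma auxIdx_eq (e : ∀ u : V, ℕ ≃ T.chi u) {u v : V} (hv : T.edge u v) :
    T.auxIdx e v = (e u).symm ⟨v, hv⟩ := by
  have hp : T.HasParent v := ⟨u, hv⟩
  have hpar : T.par v = u := T.par_eq hv
  rw [auxIdx, dif_pos hp]
  subst hpar
  rfl

lemma auxIdx_apply (e : ∀ u : V, ℕ ≃ T.chi u) (u : V) (n : ℕ) :
    T.auxIdx e ((e u n : T.chi u) : V) = n := by
  rw [T.auxIdx_eq e (e u n).2]
  rw [show (⟨((e u n : T.chi u) : V), (e u n).2⟩ : T.chi u) = e u n from Subtype.ext rfl]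
  exact (e u).symm_apply_apply n

lemma auxLam_pos (e : ∀ u : V, ℕ ≃ T.chi u) (v : V) :
    ∃ r : ℝ, 0 < r ∧ T.auxLam e v = (r : ℂ) := by
  refine ⟨_, ?_, rfl⟩
  positivity

lemma auxLam_normsq (e : ∀ u : V, ℕ ≃ T.chi u) (v : V) :
    ‖T.auxLam e v‖ ^ 2 = 4 ^ T.auxIdx e (T.par v) * (2⁻¹:ℝ) ^ T.auxIdx e v := by
  have hs : Real.sqrt 2 ^ 2 = 2 := Real.sq_sqrt (by norm_num)
  have h0 : (0:ℝ) ≤ (2:ℝ) ^ T.auxIdx e (T.par v) * ((Real.sqrt 2)⁻¹) ^ T.auxIdx e v := by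
    positivity
  rw [auxLam, Complex.norm_real, Real.norm_eq_abs, abs_of_nonneg h0]
  rw [mul_pow, ← pow_mul, ← pow_mul, mul_comm (T.auxIdx e (T.par v)) 2,
    mul_comm (T.auxIdx e v) 2, pow_mul, pow_mul]
  norm_num [hs]

lemma auxLam_normsq_child (e : ∀ u : V, ℕ ≃ T.chi u) {u v : V} (hv : T.edge u v) :
    ‖T.auxLam e v‖ ^ 2 = 4 ^ T.auxIdx e u * (2⁻¹:ℝ) ^ T.auxIdx e v := by
  rw [T.auxLam_normsq e v, T.par_eq hv]

lemma Lam_zero (lam : V → ℂ) : T.Lam lam 0 = 0 := by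
  funext v
  simp [Lam]

lemma Lam_add (lam : V → ℂ) (f g : V → ℂ) :
    T.Lam lam (f + g) = T.Lam lam f + T.Lam lam g := by
  funext v
  simp only [Lam, Pi.add_apply]
  split
  · ring
  · ring

lemma rpow_two_eq (x : ℝ) : x ^ (2:ℝ≥0∞).toReal = x ^ (2:ℕ) := by
  rw [show ((2:ℝ≥0∞)).toReal = ((2:ℕ):ℝ) by simp, Real.rpow_natCast]

/-- Each `lp.single` belongs to the domain. -/
lemma memℓp_Lam_single (e : ∀ u : V, ℕ ≃ T.chi u) (u : V) (c : ℂ) :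
    Memℓp (T.Lam (T.auxLam e) ⇑(lp.single 2 u c)) 2 := by
  set lam := T.auxLam e
  set g := T.Lam lam ⇑(lp.single 2 u c) with hg
  apply memℓp_gen
  have hconv : (fun v => ‖g v‖ ^ (2:ℝ≥0∞).toReal) = fun v => ‖g v‖ ^ (2:ℕ) := by
    funext v; exact rpow_two_eq _
  rw [hconv]
  -- g vanishes off `chi u`
  have hg0 : ∀ v, v ∉ T.chi u → ‖g v‖ ^ (2:ℕ) = 0 := by
    intro v hv
    suffices hgv : g v = 0 by rw [hgv]; simp
    rw [hg, Lam]
    split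
    · next hp =>
      have : T.par v ≠ u := by
        intro hpar
        exact hv (by rw [← hpar] at *; exact T.edge_par hp)
      rw [lp.single_apply, Pi.single_apply, if_neg this, mul_zero]
    · rfl
  have hind : Set.indicator (T.chi u) (fun v => ‖g v‖ ^ (2:ℕ)) =
      fun v => ‖g v‖ ^ (2:ℕ) := by
    apply Set.indicator_eq_self.2
    intro v hv
    by_contra hvn
    exact (Function.mem_support.1 hv) (hg0 v hvn)
  rw [← hind, ← summable_subtype_iff_indicator]
  rw [← (e u).summable_iff]
  have hval : ∀ n : ℕ, ((fun (v : T.chi u) => ‖g (v : V)‖ ^ (2:ℕ)) ∘ (e u)) n =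
      (4 ^ T.auxIdx e u * ‖c‖ ^ (2:ℕ)) * (2⁻¹:ℝ) ^ n := by
    intro n
    have hv : T.edge u ((e u n : T.chi u) : V) := (e u n).2
    have hp : T.HasParent ((e u n : T.chi u) : V) := ⟨u, hv⟩
    simp only [Function.comp_apply]
    rw [hg, Lam]
    rw [if_pos hp, T.par_eq hv]
    rw [lp.single_apply_self]
    rw [norm_mul, mul_pow, T.auxLam_normsq_child e hv, T.auxIdx_apply e u n]
    ring
  exact Summable.congr
    ((summable_geometric_of_lt_one (by norm_num) (by norm_num)).mul_left
      (4 ^ T.auxIdx e u * ‖c‖ ^ (2:ℕ))) (fun n => (hval n).symm)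

/-- The key vanishing lemma for the square domain. -/
lemma square_vanish (e : ∀ u : V, ℕ ≃ T.chi u) (f : lp (fun _ : V => ℂ) 2)
    (hsq : Memℓp (T.Lam (T.auxLam e) (T.Lam (T.auxLam e) ⇑f)) 2) (u : V) :
    f u = 0 := by
  set lam := T.auxLam e
  set G := T.Lam lam (T.Lam lam ⇑f) with hG
  have hsum : Summable fun v => ‖G v‖ ^ (2:ℕ) := by
    have := hsq.summable (p := 2) (by norm_num)
    simpa only [rpow_two_eq] using this
  set w : ℕ → V := fun n => ((e u n : T.chi u) : V) with hw
  set F : ℕ → V := fun n => ((e (w n) 0 : T.chi (w n)) : V) with hF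
  have hwedge : ∀ n, T.edge u (w n) := fun n => (e u n).2
  have hFedge : ∀ n, T.edge (w n) (F n) := fun n => (e (w n) 0).2
  have hwpar : ∀ n, T.par (w n) = u := fun n => T.par_eq (hwedge n)
  have hFpar : ∀ n, T.par (F n) = w n := fun n => T.par_eq (hFedge n)
  have hFinj : Function.Injective F := by
    intro n m hnm
    have h1 : w n = w m := by rw [← hFpar n, ← hFpar m, hnm]
    have h2 : (e u n : T.chi u) = (e u m : T.chi u) := Subtype.ext h1
    exact (e u).injective h2
  have hval : ∀ n : ℕ, ‖G (F n)‖ ^ (2:ℕ) =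
      (2:ℝ) ^ n * (4 ^ T.auxIdx e u * ‖f u‖ ^ (2:ℕ)) := by
    intro n
    have hpF : T.HasParent (F n) := ⟨w n, hFedge n⟩
    have hpw : T.HasParent (w n) := ⟨u, hwedge n⟩
    have hGF : G (F n) = lam (F n) * (lam (w n) * f u) := by
      rw [hG, Lam, if_pos hpF, hFpar n]
      congr 1
      rw [Lam, if_pos hpw, hwpar n]
    rw [hGF, norm_mul, norm_mul, mul_pow, mul_pow]
    rw [T.auxLam_normsq_child e (hFedge n), T.auxLam_normsq_child e (hwedge n)]
    have hFidx : T.auxIdx e (F n) = 0 := T.auxIdx_apply e (w n) 0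
    have hwidx : T.auxIdx e (w n) = n := T.auxIdx_apply e u n
    rw [hFidx, hwidx, pow_zero, mul_one]
    have h42 : (4:ℝ) ^ n * (2⁻¹:ℝ) ^ n = 2 ^ n := by
      rw [← mul_pow]; norm_num
    linear_combination (4 ^ T.auxIdx e u * ‖f u‖ ^ 2) * h42
  have hsum2 : Summable fun n : ℕ =>
      (2:ℝ) ^ n * (4 ^ T.auxIdx e u * ‖f u‖ ^ (2:ℕ)) := by
    exact (hsum.comp_injective hFinj).congr hval
  by_contra hne
  set C : ℝ := 4 ^ T.auxIdx e u * ‖f u‖ ^ (2:ℕ) with hC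
  have hCpos : 0 < C := by
    have h1 : (0:ℝ) < 4 ^ T.auxIdx e u := by positivity
    have h2 : 0 < ‖f u‖ ^ (2:ℕ) := by
      have h3 : ‖f u‖ ≠ 0 := norm_ne_zero_iff.2 hne
      positivity
    exact mul_pos h1 h2
  have htend := hsum2.tendsto_atTop_zero
  have hev : ∀ᶠ n in Filter.atTop, (2:ℝ) ^ n * C < C :=
    htend.eventually (gt_mem_nhds hCpos)
  obtain ⟨n, hn⟩ := hev.exists
  have h1 : (1:ℝ) ≤ 2 ^ n := one_le_pow₀ (by norm_num)
  nlinarith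

end DirectedTree



/-- Theorem 3.1, (ii) ⇒ (i): if every vertex has countably infinitely many children,
then there is a family of nonzero (indeed positive real) weights such that `S_λ` is
densely defined and `D(S_λ²) = {0}`. -/
theorem stmt8 {V : Type} (T : DirectedTree V)
    (h : ∀ u : V, (T.chi u).Countable ∧ (T.chi u).Infinite) :
    ∃ lam : V → ℂ, (∀ v ∈ T.Vcirc, ∃ r : ℝ, 0 < r ∧ lam v = (r : ℂ)) ∧
      (∀ v ∈ T.Vcirc, lam v ≠ 0) ∧ Dense (T.domain lam) ∧
      T.squareDomain lam = ({0} : Set (lp (fun _ : V => ℂ) 2)) := by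
  classical
  have hE : ∀ u : V, Nonempty (ℕ ≃ T.chi u) := by
    intro u
    have h1 : Countable (T.chi u) := (h u).1.to_subtype
    have h2 : Infinite (T.chi u) := (h u).2.to_subtype
    exact ⟨((nonempty_denumerable (T.chi u)).some.eqv).symm⟩
  let e : ∀ u : V, ℕ ≃ T.chi u := fun u => (hE u).some
  refine ⟨T.auxLam e, fun v _ => T.auxLam_pos e v, ?_, ?_, ?_⟩
  · intro v _
    obtain ⟨r, hr, hre⟩ := T.auxLam_pos e v
    rw [hre]
    exact_mod_cast hr.ne'
  · -- density
    intro f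
    haveI : Fact ((1:ℝ≥0∞) ≤ 2) := ⟨by norm_num⟩
    have hs := lp.hasSum_single (E := fun _ : V => ℂ) (p := 2) (by norm_num) f
    refine mem_closure_of_tendsto hs (Filter.Eventually.of_forall ?_)
    intro s
    induction s using Finset.induction_on with
    | empty =>
      show Memℓp (T.Lam (T.auxLam e) ⇑(∑ u ∈ (∅ : Finset V), lp.single 2 u (f u))) 2
      rw [Finset.sum_empty, lp.coeFn_zero, T.Lam_zero]
      exact zero_memℓp
    | insert a s' hx ih =>
      show Memℓp (T.Lam (T.auxLam e) ⇑(∑ u ∈ insert a s', lp.single 2 u (f u))) 2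
      rw [Finset.sum_insert hx, lp.coeFn_add, T.Lam_add]
      exact (T.memℓp_Lam_single e a (f a)).add ih
  · -- square domain
    ext g
    simp only [Set.mem_singleton_iff]
    constructor
    · rintro ⟨hg1, hg2⟩
      have hcoe : ⇑(T.shift (T.auxLam e) g) = T.Lam (T.auxLam e) ⇑g := by
        rw [DirectedTree.shift, dif_pos hg1]
      have hsq : Memℓp (T.Lam (T.auxLam e) (T.Lam (T.auxLam e) ⇑g)) 2 := by
        have := hg2
        rw [DirectedTree.domain, Set.mem_setOf_eq, hcoe] at this
        exact this
      apply lp.ext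
      funext v
      rw [lp.coeFn_zero]
      exact T.square_vanish e g hsq v
    · rintro rfl
      have h0mem : (0 : lp (fun _ : V => ℂ) 2) ∈ T.domain (T.auxLam e) := by
        show Memℓp (T.Lam (T.auxLam e) ⇑(0 : lp (fun _ : V => ℂ) 2)) 2
        rw [lp.coeFn_zero, T.Lam_zero]
        exact zero_memℓp
      refine ⟨h0mem, ?_⟩
      have hL0 : T.Lam (T.auxLam e) ⇑(0 : lp (fun _ : V => ℂ) 2) = 0 := by
        rw [lp.coeFn_zero, T.Lam_zero]
      have hsz : T.shift (T.auxLam e) 0 = 0 := by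
        rw [DirectedTree.shift, dif_pos h0mem]
        apply lp.ext
        show T.Lam (T.auxLam e) ⇑(0 : lp (fun _ : V => ℂ) 2) = ⇑(0 : lp (fun _ : V => ℂ) 2)
        rw [hL0, lp.coeFn_zero]
      rw [hsz]
      exact h0mem
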